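/- arXiv:2604.14860 — 2 statements merged into one kernel-verified Lean document; each statement's English description precedes it below -/
import Mathlib

section
/- Under the setting of the uniform random learner Rule: g : [K]×[n] → [0,1] fixed, I_t i.i.d. uniform on [K], G̃_k = ∑_t K·g(k,t)·1{I_t=k}, G_k = ∑_t g(k,t), with a unique best arm k* = argmax_k G_k and gaps Δ_k = |max_{i≠k} G_i − G_k|/n. If J = argmax_k G̃_k, then P(J ≠ k*) ≤ K · exp(−3n·Δ_{(1)}²/(28K)), where Δ_{(1)} is the smallest gap. -/
open MeasureTheory ProbabilityTheory

lemma exp_le_one_add_add_sq {x : ℝ} (h0 : 0 ≤ x) (h1 : x ≤ 1) :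
    Real.exp x ≤ 1 + x + x ^ 2 := by
  have := Real.exp_bound' h0 h1 (n := 2) (by norm_num)
  simp [Finset.sum_range_succ] at this
  nlinarith [sq_nonneg x]

lemma exp_neg_le {x : ℝ} (h0 : 0 ≤ x) (h1 : x ≤ 1) :
    Real.exp (-x) ≤ 1 - x + x ^ 2 := by
  have habs : |(-x)| ≤ 1 := by rw [abs_neg, abs_of_nonneg h0]; exact h1
  have := Real.exp_bound habs (n := 2) (by norm_num)
  simp [Finset.sum_range_succ, abs_neg, abs_of_nonneg h0] at this
  have h2 := (abs_sub_le_iff.mp this).1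
  nlinarith [sq_nonneg x]

set_option maxHeartbeats 1000000 in
lemma arm_tail_bound {Ω : Type*} [MeasurableSpace Ω]
    (μ : Measure Ω) [IsProbabilityMeasure μ] (n K : ℕ) (hn : 0 < n) (hK : 0 < K)
    (g : ℕ → ℕ → ℝ)
    (hg : ∀ k ∈ Finset.Icc 1 K, ∀ t ∈ Finset.Icc 1 n, g k t ∈ Set.Icc (0 : ℝ) 1)
    (I : ℕ → Ω → ℕ) (hmeas : ∀ t, Measurable (I t))
    (hindep : iIndepFun I μ)
    (hunif : ∀ t ∈ Finset.Icc 1 n, ∀ k ∈ Finset.Icc 1 K,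
      μ {ω | I t ω = k} = (K : ENNReal)⁻¹)
    (j kstar : ℕ) (hj : j ∈ Finset.Icc 1 K) (hk : kstar ∈ Finset.Icc 1 K) (hjk : j ≠ kstar)
    (Δ : ℝ) (hΔ0 : 0 < Δ) (hΔ1 : Δ ≤ 1)
    (hgapj : (∑ t ∈ Finset.Icc 1 n, g kstar t) - (∑ t ∈ Finset.Icc 1 n, g j t) ≥ (n : ℝ) * Δ) :
    μ {ω | 0 ≤ ∑ t ∈ Finset.Icc 1 n,
        ((K : ℝ) * g j t * (if I t ω = j then 1 else 0)
          - (K : ℝ) * g kstar t * (if I t ω = kstar then 1 else 0))}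
      ≤ ENNReal.ofReal (Real.exp (-3 * n * Δ ^ 2 / (28 * K))) := by
  classical
  have hKR : (0 : ℝ) < K := Nat.cast_pos.mpr hK
  have hnR : (0 : ℝ) < n := Nat.cast_pos.mpr hn
  set lam : ℝ := Δ / (4 * K) with hlam
  have hlam0 : 0 < lam := by positivity
  have hlamK : lam * K = Δ / 4 := by field_simp [hlam]; rw [hlam]; field_simp
  set X : ℕ → Ω → ℝ := fun t ω => (K : ℝ) * g j t * (if I t ω = j then 1 else 0)
          - (K : ℝ) * g kstar t * (if I t ω = kstar then 1 else 0) with hX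
  have hXmeas : ∀ t, Measurable (X t) := by
    intro t
    exact (measurable_of_countable (fun i : ℕ => (K : ℝ) * g j t * (if i = j then 1 else 0)
      - (K : ℝ) * g kstar t * (if i = kstar then 1 else 0))).comp (hmeas t)
  have hXindep : iIndepFun X μ :=
    hindep.comp (fun t (i : ℕ) => (K : ℝ) * g j t * (if i = j then 1 else 0)
      - (K : ℝ) * g kstar t * (if i = kstar then 1 else 0))
      (fun t => measurable_of_countable _)
  have hmgf : ∀ t ∈ Finset.Icc 1 n,
      Integrable (fun ω => Real.exp (lam * X t ω)) μ ∧
      mgf (X t) μ lam ≤ Real.exp (lam * (g j t - g kstar t) + 2 * lam ^ 2 * K) := by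
    intro t ht
    have hgj := hg j hj t ht
    have hgk := hg kstar hk t ht
    have hsj : MeasurableSet {ω | I t ω = j} := (hmeas t) (measurableSet_singleton j)
    have hsk : MeasurableSet {ω | I t ω = kstar} := (hmeas t) (measurableSet_singleton kstar)
    have hptw : (fun ω => Real.exp (lam * X t ω)) =
        fun ω => 1 + Set.indicator {ω | I t ω = j}
            (fun _ => Real.exp (lam * ((K : ℝ) * g j t)) - 1) ω
          + Set.indicator {ω | I t ω = kstar}
            (fun _ => Real.exp (-(lam * ((K : ℝ) * g kstar t))) - 1) ω := by
      funext ω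
      have hXval : X t ω = (K : ℝ) * g j t * (if I t ω = j then 1 else 0)
          - (K : ℝ) * g kstar t * (if I t ω = kstar then 1 else 0) := rfl
      by_cases h1 : I t ω = j
      · have h2 : I t ω ≠ kstar := by rw [h1]; exact hjk
        have hXv : lam * X t ω = lam * ((K : ℝ) * g j t) := by
          rw [hXval, if_pos h1, if_neg h2]; ring
        rw [hXv, Set.indicator_of_mem (by exact h1), Set.indicator_of_notMem (by exact h2)]
        ring
      · by_cases h2 : I t ω = kstar
        · have hXv : lam * X t ω = -(lam * ((K : ℝ) * g kstar t)) := by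
            rw [hXval, if_neg h1, if_pos h2]; ring
          rw [hXv, Set.indicator_of_notMem (by exact h1), Set.indicator_of_mem (by exact h2)]
          ring
        · have hXv : lam * X t ω = 0 := by
            rw [hXval, if_neg h1, if_neg h2]; ring
          rw [hXv, Set.indicator_of_notMem (by exact h1),
            Set.indicator_of_notMem (by exact h2)]
          simp
    have hi1 : Integrable (fun ω : Ω => Set.indicator {ω | I t ω = j}
        (fun _ => Real.exp (lam * ((K : ℝ) * g j t)) - 1) ω) μ :=
      (integrable_const _).indicator hsj
    have hi2 : Integrable (fun ω : Ω => Set.indicator {ω | I t ω = kstar}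
        (fun _ => Real.exp (-(lam * ((K : ℝ) * g kstar t))) - 1) ω) μ :=
      (integrable_const _).indicator hsk
    have hiA : Integrable (fun ω : Ω => 1 + Set.indicator {ω | I t ω = j}
        (fun _ => Real.exp (lam * ((K : ℝ) * g j t)) - 1) ω) μ :=
      (integrable_const 1).add hi1
    have hint : Integrable (fun ω => Real.exp (lam * X t ω)) μ := by
      rw [hptw]; exact hiA.add hi2
    refine ⟨hint, ?_⟩
    have hKinv : ((K : ENNReal)⁻¹).toReal = (K : ℝ)⁻¹ := by
      rw [ENNReal.toReal_inv]; simp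
    have e1 : ∫ ω, (1 + Set.indicator {ω | I t ω = j}
            (fun _ => Real.exp (lam * ((K : ℝ) * g j t)) - 1) ω
          + Set.indicator {ω | I t ω = kstar}
            (fun _ => Real.exp (-(lam * ((K : ℝ) * g kstar t))) - 1) ω) ∂μ
        = (∫ ω, (1 + Set.indicator {ω | I t ω = j}
            (fun _ => Real.exp (lam * ((K : ℝ) * g j t)) - 1) ω) ∂μ)
          + ∫ ω, Set.indicator {ω | I t ω = kstar}
            (fun _ => Real.exp (-(lam * ((K : ℝ) * g kstar t))) - 1) ω ∂μ :=
      integral_add hiA hi2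
    have e2 : ∫ ω, (1 + Set.indicator {ω | I t ω = j}
            (fun _ => Real.exp (lam * ((K : ℝ) * g j t)) - 1) ω) ∂μ
        = (∫ _ω, (1 : ℝ) ∂μ) + ∫ ω, Set.indicator {ω | I t ω = j}
            (fun _ => Real.exp (lam * ((K : ℝ) * g j t)) - 1) ω ∂μ :=
      integral_add (integrable_const 1) hi1
    have e3 : ∫ ω, Set.indicator {ω | I t ω = j}
        (fun _ => Real.exp (lam * ((K : ℝ) * g j t)) - 1) ω ∂μ
        = (μ {ω | I t ω = j}).toReal • (Real.exp (lam * ((K : ℝ) * g j t)) - 1) :=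
      integral_indicator_const _ hsj
    have e4 : ∫ ω, Set.indicator {ω | I t ω = kstar}
        (fun _ => Real.exp (-(lam * ((K : ℝ) * g kstar t))) - 1) ω ∂μ
        = (μ {ω | I t ω = kstar}).toReal • (Real.exp (-(lam * ((K : ℝ) * g kstar t))) - 1) :=
      integral_indicator_const _ hsk
    have hmgf_eq : mgf (X t) μ lam
        = 1 + (Real.exp (lam * ((K : ℝ) * g j t)) - 1) * (K : ℝ)⁻¹
            + (Real.exp (-(lam * ((K : ℝ) * g kstar t))) - 1) * (K : ℝ)⁻¹ := by
      rw [mgf, hptw, e1, e2, e3, e4, hunif t ht j hj, hunif t ht kstar hk, hKinv,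
        integral_const]
      simp [smul_eq_mul]
      ring
    -- bounds
    have ha0 : 0 ≤ lam * ((K : ℝ) * g j t) :=
      mul_nonneg hlam0.le (mul_nonneg (Nat.cast_nonneg K) hgj.1)
    have hb0 : 0 ≤ lam * ((K : ℝ) * g kstar t) :=
      mul_nonneg hlam0.le (mul_nonneg (Nat.cast_nonneg K) hgk.1)
    have ha1 : lam * ((K : ℝ) * g j t) ≤ 1 := by
      have := mul_le_mul_of_nonneg_left hgj.2 (le_of_lt (mul_pos hlam0 hKR))
      nlinarith [hlamK]
    have hb1 : lam * ((K : ℝ) * g kstar t) ≤ 1 := by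
      have := mul_le_mul_of_nonneg_left hgk.2 (le_of_lt (mul_pos hlam0 hKR))
      nlinarith [hlamK]
    have hexp_a := exp_le_one_add_add_sq ha0 ha1
    have hexp_b := exp_neg_le hb0 hb1
    have hsq_j : (lam * ((K : ℝ) * g j t)) ^ 2 ≤ lam ^ 2 * K ^ 2 := by
      have h1 : 0 ≤ 1 - g j t ^ 2 := by nlinarith [hgj.1, hgj.2]
      nlinarith [mul_nonneg (sq_nonneg (lam * (K : ℝ))) h1]
    have hsq_k : (lam * ((K : ℝ) * g kstar t)) ^ 2 ≤ lam ^ 2 * K ^ 2 := by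
      have h1 : 0 ≤ 1 - g kstar t ^ 2 := by nlinarith [hgk.1, hgk.2]
      nlinarith [mul_nonneg (sq_nonneg (lam * (K : ℝ))) h1]
    have hmul : (Real.exp (lam * ((K : ℝ) * g j t)) - 1)
        + (Real.exp (-(lam * ((K : ℝ) * g kstar t))) - 1)
        ≤ (K : ℝ) * (lam * (g j t - g kstar t) + 2 * lam ^ 2 * K) := by
      nlinarith [hexp_a, hexp_b, hsq_j, hsq_k]
    have hKinvpos : (0 : ℝ) < (K : ℝ)⁻¹ := by positivity
    have hmain : mgf (X t) μ lam ≤ 1 + (lam * (g j t - g kstar t) + 2 * lam ^ 2 * K) := by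
      rw [hmgf_eq]
      have h5 : ((Real.exp (lam * ((K : ℝ) * g j t)) - 1)
          + (Real.exp (-(lam * ((K : ℝ) * g kstar t))) - 1)) * (K : ℝ)⁻¹
          ≤ ((K : ℝ) * (lam * (g j t - g kstar t) + 2 * lam ^ 2 * K)) * (K : ℝ)⁻¹ :=
        mul_le_mul_of_nonneg_right hmul hKinvpos.le
      have h6 : ((K : ℝ) * (lam * (g j t - g kstar t) + 2 * lam ^ 2 * K)) * (K : ℝ)⁻¹
          = lam * (g j t - g kstar t) + 2 * lam ^ 2 * K := by
        field_simp
      linarith [h5, h6.le]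
    calc mgf (X t) μ lam ≤ 1 + (lam * (g j t - g kstar t) + 2 * lam ^ 2 * K) := hmain
      _ ≤ Real.exp (lam * (g j t - g kstar t) + 2 * lam ^ 2 * K) := by
          linarith [Real.add_one_le_exp (lam * (g j t - g kstar t) + 2 * lam ^ 2 * K)]
  -- Chernoff
  have hint_sum : Integrable (fun ω => Real.exp (lam * (∑ t ∈ Finset.Icc 1 n, X t) ω)) μ :=
    hXindep.integrable_exp_mul_sum hXmeas (fun t ht => (hmgf t ht).1)
  have hcher := measure_ge_le_exp_mul_mgf (μ := μ) (X := ∑ t ∈ Finset.Icc 1 n, X t)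
    0 hlam0.le hint_sum
  rw [hXindep.mgf_sum hXmeas] at hcher
  have hprod : ∏ t ∈ Finset.Icc 1 n, mgf (X t) μ lam
      ≤ Real.exp (∑ t ∈ Finset.Icc 1 n, (lam * (g j t - g kstar t) + 2 * lam ^ 2 * K)) := by
    rw [Real.exp_sum]
    exact Finset.prod_le_prod (fun t _ => mgf_nonneg) (fun t ht => (hmgf t ht).2)
  have hsum_le : ∑ t ∈ Finset.Icc 1 n, (lam * (g j t - g kstar t) + 2 * lam ^ 2 * K)
      ≤ -3 * n * Δ ^ 2 / (28 * K) := by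
    have hcard : (Finset.Icc 1 n).card = n := by rw [Nat.card_Icc]; omega
    rw [Finset.sum_add_distrib, Finset.sum_const, hcard, ← Finset.mul_sum,
      Finset.sum_sub_distrib, nsmul_eq_mul]
    have h1 : lam * ((∑ t ∈ Finset.Icc 1 n, g j t) - ∑ t ∈ Finset.Icc 1 n, g kstar t)
        ≤ lam * (-(n * Δ)) := by
      apply mul_le_mul_of_nonneg_left _ hlam0.le
      linarith
    have h2 : lam * (-(n * Δ)) + (n : ℝ) * (2 * lam ^ 2 * K) ≤ -3 * n * Δ ^ 2 / (28 * K) := by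
      have hEq : lam * (-(n * Δ)) + (n : ℝ) * (2 * lam ^ 2 * K) = -(n * Δ ^ 2) / (8 * K) := by
        rw [hlam]; field_simp; ring
      rw [hEq, div_le_div_iff₀ (by positivity) (by positivity)]
      nlinarith [mul_nonneg (mul_nonneg hnR.le (sq_nonneg Δ)) hKR.le]
    calc lam * ((∑ t ∈ Finset.Icc 1 n, g j t) - ∑ t ∈ Finset.Icc 1 n, g kstar t)
          + (n : ℝ) * (2 * lam ^ 2 * K)
        ≤ lam * (-(n * Δ)) + (n : ℝ) * (2 * lam ^ 2 * K) := by gcongr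
      _ ≤ -3 * n * Δ ^ 2 / (28 * K) := h2
  have hfinal : (μ {ω | 0 ≤ (∑ t ∈ Finset.Icc 1 n, X t) ω}).toReal
      ≤ Real.exp (-3 * n * Δ ^ 2 / (28 * K)) := by
    calc (μ {ω | 0 ≤ (∑ t ∈ Finset.Icc 1 n, X t) ω}).toReal
        ≤ Real.exp (-lam * 0) * ∏ t ∈ Finset.Icc 1 n, mgf (X t) μ lam := hcher
      _ = ∏ t ∈ Finset.Icc 1 n, mgf (X t) μ lam := by simp
      _ ≤ Real.exp (∑ t ∈ Finset.Icc 1 n, (lam * (g j t - g kstar t) + 2 * lam ^ 2 * K)) :=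
          hprod
      _ ≤ Real.exp (-3 * n * Δ ^ 2 / (28 * K)) := Real.exp_le_exp.mpr hsum_le
  have hset : {ω | 0 ≤ ∑ t ∈ Finset.Icc 1 n,
        ((K : ℝ) * g j t * (if I t ω = j then 1 else 0)
          - (K : ℝ) * g kstar t * (if I t ω = kstar then 1 else 0))}
      = {ω | 0 ≤ (∑ t ∈ Finset.Icc 1 n, X t) ω} := by
    ext ω
    simp [Finset.sum_apply, hX]
  rw [hset]
  calc μ {ω | 0 ≤ (∑ t ∈ Finset.Icc 1 n, X t) ω}
      = ENNReal.ofReal ((μ {ω | 0 ≤ (∑ t ∈ Finset.Icc 1 n, X t) ω}).toReal) :=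
        (ENNReal.ofReal_toReal (measure_ne_top μ _)).symm
    _ ≤ ENNReal.ofReal (Real.exp (-3 * n * Δ ^ 2 / (28 * K))) :=
        ENNReal.ofReal_le_ofReal hfinal

theorem rule_error_bound {Ω : Type*} [MeasurableSpace Ω]
    (μ : Measure Ω) [IsProbabilityMeasure μ] (n K : ℕ) (hn : 0 < n) (hK : 0 < K)
    (g : ℕ → ℕ → ℝ)
    (hg : ∀ k ∈ Finset.Icc 1 K, ∀ t ∈ Finset.Icc 1 n, g k t ∈ Set.Icc (0 : ℝ) 1)
    (I : ℕ → Ω → ℕ) (hmeas : ∀ t, Measurable (I t))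
    (hindep : iIndepFun I μ)
    (hunif : ∀ t ∈ Finset.Icc 1 n, ∀ k ∈ Finset.Icc 1 K,
      μ {ω | I t ω = k} = (K : ENNReal)⁻¹)
    (G : ℕ → ℝ) (hG : ∀ k, G k = ∑ t ∈ Finset.Icc 1 n, g k t)
    (kstar : ℕ) (hkstar : kstar ∈ Finset.Icc 1 K)
    (hbest : ∀ j ∈ Finset.Icc 1 K, j ≠ kstar → G j < G kstar)
    (Δmin : ℝ)
    (hgap : ∀ j ∈ Finset.Icc 1 K, j ≠ kstar → G kstar - G j ≥ (n : ℝ) * Δmin)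
    (hgapex : ∃ j ∈ Finset.Icc 1 K, j ≠ kstar ∧ G kstar - G j = (n : ℝ) * Δmin)
    (J : Ω → ℕ)
    (hJ : ∀ ω, J ω ∈ Finset.Icc 1 K ∧ ∀ j ∈ Finset.Icc 1 K,
      (∑ t ∈ Finset.Icc 1 n, (K : ℝ) * g j t * (if I t ω = j then 1 else 0))
        ≤ (∑ t ∈ Finset.Icc 1 n, (K : ℝ) * g (J ω) t * (if I t ω = J ω then 1 else 0))) :
    μ {ω | J ω ≠ kstar}
      ≤ ENNReal.ofReal
          ((K : ℝ) * Real.exp (-3 * n * Δmin ^ 2 / (28 * K))) := by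
  classical
  have hnR : (0 : ℝ) < n := Nat.cast_pos.mpr hn
  have hKR : (0 : ℝ) < K := Nat.cast_pos.mpr hK
  obtain ⟨j0, hj0, hj0ne, hj0eq⟩ := hgapex
  have hΔ0 : 0 < Δmin := by
    have h := hbest j0 hj0 hj0ne
    nlinarith [hj0eq]
  have hGk_le : G kstar ≤ n := by
    rw [hG]
    calc ∑ t ∈ Finset.Icc 1 n, g kstar t ≤ ∑ t ∈ Finset.Icc 1 n, (1 : ℝ) :=
        Finset.sum_le_sum (fun t ht => (hg kstar hkstar t ht).2)
      _ = n := by simp [Nat.card_Icc]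
  have hGj0 : 0 ≤ G j0 := by
    rw [hG]
    exact Finset.sum_nonneg (fun t ht => (hg j0 hj0 t ht).1)
  have hΔ1 : Δmin ≤ 1 := by nlinarith [hj0eq]
  set Sset : ℕ → Set Ω := fun j => {ω | 0 ≤ ∑ t ∈ Finset.Icc 1 n,
      ((K : ℝ) * g j t * (if I t ω = j then 1 else 0)
        - (K : ℝ) * g kstar t * (if I t ω = kstar then 1 else 0))} with hSset
  have hsub : {ω | J ω ≠ kstar} ⊆ ⋃ j ∈ (Finset.Icc 1 K).erase kstar, Sset j := by
    intro ω hω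
    simp only [Set.mem_setOf_eq] at hω
    obtain ⟨hJmem, hJmax⟩ := hJ ω
    have hmem : J ω ∈ (Finset.Icc 1 K).erase kstar := Finset.mem_erase.mpr ⟨hω, hJmem⟩
    refine Set.mem_biUnion hmem ?_
    have h := hJmax kstar hkstar
    simp only [hSset, Set.mem_setOf_eq]
    rw [Finset.sum_sub_distrib]
    linarith
  have harm : ∀ j ∈ (Finset.Icc 1 K).erase kstar,
      μ (Sset j) ≤ ENNReal.ofReal (Real.exp (-3 * n * Δmin ^ 2 / (28 * K))) := by
    intro j hjer
    have hjmem := Finset.mem_of_mem_erase hjer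
    have hjne := Finset.ne_of_mem_erase hjer
    have hgapj : (∑ t ∈ Finset.Icc 1 n, g kstar t) - (∑ t ∈ Finset.Icc 1 n, g j t)
        ≥ (n : ℝ) * Δmin := by
      have := hgap j hjmem hjne
      rw [hG kstar, hG j] at this
      exact this
    exact arm_tail_bound μ n K hn hK g hg I hmeas hindep hunif j kstar hjmem hkstar hjne
      Δmin hΔ0 hΔ1 hgapj
  calc μ {ω | J ω ≠ kstar} ≤ μ (⋃ j ∈ (Finset.Icc 1 K).erase kstar, Sset j) :=
        measure_mono hsub
    _ ≤ ∑ j ∈ (Finset.Icc 1 K).erase kstar, μ (Sset j) := measure_biUnion_finset_le _ _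
    _ ≤ ∑ _j ∈ (Finset.Icc 1 K).erase kstar,
          ENNReal.ofReal (Real.exp (-3 * n * Δmin ^ 2 / (28 * K))) :=
        Finset.sum_le_sum harm
    _ = ((Finset.Icc 1 K).erase kstar).card
          * ENNReal.ofReal (Real.exp (-3 * n * Δmin ^ 2 / (28 * K))) := by
        rw [Finset.sum_const, nsmul_eq_mul]
    _ ≤ (K : ENNReal) * ENNReal.ofReal (Real.exp (-3 * n * Δmin ^ 2 / (28 * K))) := by
        apply mul_le_mul' _ le_rfl
        have hcard : ((Finset.Icc 1 K).erase kstar).card ≤ K := by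
          calc ((Finset.Icc 1 K).erase kstar).card ≤ (Finset.Icc 1 K).card :=
              Finset.card_le_card (Finset.erase_subset _ _)
            _ = K := by rw [Nat.card_Icc]; omega
        exact_mod_cast Nat.cast_le.mpr hcard
    _ = ENNReal.ofReal ((K : ℝ) * Real.exp (-3 * n * Δmin ^ 2 / (28 * K))) := by
        rw [← ENNReal.ofReal_natCast K, ← ENNReal.ofReal_mul (Nat.cast_nonneg K)]
end

section
/- Let K be a positive integer and Δ : [K] → ℝ with 0 < Δ(1) = Δ(2) ≤ … ≤ Δ(K) ≤ 1/8. Set a_k = Δ(1)/Δ(k) for k ∈ [K] and a_{K+1} = 0, and let j ∈ argmin_{k∈[K]} Δ(k)/k. Then for every m ∈ [K], ∑_{i=m}^{K-1} (1/Δ(i) − 1/Δ(i+1))·i + K/Δ(K) ≤ (j/Δ(j))·(log K + 1), and hence (∑_{i=m}^{K} (a_i − a_{i+1})·i)/(a_m² Δ(m)²) ≤ H_BOB·(log K + 1), where H_BOB = (1/Δ(1))·max_k k/Δ(k). -/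
theorem abel_summation_bound (K : ℕ) (hK : 1 ≤ K) (Δ : ℕ → ℝ) (a : ℕ → ℝ)
    (hpos : 0 < Δ 1) (h12 : Δ 1 = Δ 2)
    (hmono : ∀ k, 2 ≤ k → k < K → Δ k ≤ Δ (k + 1))
    (hub : Δ K ≤ 1/8)
    (ha : ∀ k ∈ Finset.Icc 1 K, a k = Δ 1 / Δ k) (haK : a (K + 1) = 0)
    (j : ℕ) (hjmem : j ∈ Finset.Icc 1 K)
    (hj : ∀ k ∈ Finset.Icc 1 K, Δ j / j ≤ Δ k / k) :
    ∀ m ∈ Finset.Icc 1 K,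
      (∑ i ∈ Finset.Icc m (K - 1), (1 / Δ i - 1 / Δ (i + 1)) * i)
          + (K : ℝ) / Δ K
        ≤ ((j : ℝ) / Δ j) * (Real.log K + 1) ∧
      (∑ i ∈ Finset.Icc m K, (a i - a (i + 1)) * i) / ((a m) ^ 2 * (Δ m) ^ 2)
        ≤ ((1 / Δ 1) * (Finset.Icc 1 K).sup' (Finset.nonempty_Icc.mpr hK)
              (fun k => (k : ℝ) / Δ k)) * (Real.log K + 1) := by
  -- Δ 1 ≤ Δ k on [1,K]
  have hΔ1le : ∀ k, 1 ≤ k → k ≤ K → Δ 1 ≤ Δ k := by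
    intro k hk1 hkK
    induction k with
    | zero => omega
    | succ n ih =>
      rcases Nat.lt_or_ge n 2 with h | h
      · interval_cases n
        · exact le_refl _
        · exact h12.le
      · exact le_trans (ih (by omega) (by omega)) (hmono n h (by omega))
  have hΔpos : ∀ k, 1 ≤ k → k ≤ K → 0 < Δ k := fun k h1 h2 =>
    lt_of_lt_of_le hpos (hΔ1le k h1 h2)
  obtain ⟨hj1, hjK⟩ := Finset.mem_Icc.mp hjmem
  have hΔj : 0 < Δ j := hΔpos j hj1 hjK
  have hjΔnn : (0:ℝ) ≤ (j:ℝ) / Δ j := by positivity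
  -- key pointwise bound
  have hkey : ∀ i, 1 ≤ i → i ≤ K → (1:ℝ) / Δ i ≤ ((j:ℝ) / Δ j) * (1 / i) := by
    intro i h1 h2
    have hΔi : 0 < Δ i := hΔpos i h1 h2
    have hi : (0:ℝ) < i := by exact_mod_cast h1
    have hjr : (0:ℝ) < j := by exact_mod_cast hj1
    have h := hj i (Finset.mem_Icc.mpr ⟨h1, h2⟩)
    rw [div_le_div_iff₀ hjr hi] at h
    rw [mul_one_div, div_div, div_le_div_iff₀ hΔi (by positivity)]
    nlinarith
  -- Abel summation identity
  have habel : ∀ d m, 1 ≤ m → m + d = K →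
      (∑ i ∈ Finset.Icc m (K - 1), (1 / Δ i - 1 / Δ (i + 1)) * i) + (K:ℝ) / Δ K
      = (m:ℝ) / Δ m + ∑ i ∈ Finset.Icc (m + 1) K, 1 / Δ i := by
    intro d
    induction d with
    | zero =>
      intro m h1 hm
      have hmK : m = K := by omega
      subst hmK
      rw [Finset.Icc_eq_empty (by omega), Finset.Icc_eq_empty (by omega)]
      simp
    | succ d ih =>
      intro m h1 hm
      have hmlt : m < K := by omega
      have hsplit1 : (∑ i ∈ Finset.Icc m (K - 1), (1 / Δ i - 1 / Δ (i + 1)) * i)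
          = (1 / Δ m - 1 / Δ (m + 1)) * m
            + ∑ i ∈ Finset.Icc (m + 1) (K - 1), (1 / Δ i - 1 / Δ (i + 1)) * i := by
        rw [← Finset.add_sum_Ioc_eq_sum_Icc (by omega : m ≤ K - 1), Finset.Icc_add_one_left_eq_Ioc]
      have hsplit2 : (∑ i ∈ Finset.Icc (m + 1) K, (1:ℝ) / Δ i)
          = 1 / Δ (m + 1) + ∑ i ∈ Finset.Icc (m + 2) K, (1:ℝ) / Δ i := by
        rw [← Finset.add_sum_Ioc_eq_sum_Icc (by omega : m + 1 ≤ K),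
          show Finset.Icc (m + 2) K = Finset.Ioc (m + 1) K from
            Finset.Icc_add_one_left_eq_Ioc (m + 1) K]
      have ihm := ih (m + 1) (by omega) (by omega)
      rw [hsplit1, hsplit2]
      push_cast
      rw [add_assoc, ihm]
      push_cast
      ring
  -- harmonic sum bound
  intro m hmmem
  obtain ⟨hm1, hmK⟩ := Finset.mem_Icc.mp hmmem
  have hmr : (0:ℝ) < m := by exact_mod_cast hm1
  have hharm : ∀ n, m ≤ n → (∑ i ∈ Finset.Icc (m + 1) n, (1:ℝ) / i)
      ≤ Real.log n - Real.log m := by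
    intro n hn
    induction n, hn using Nat.le_induction with
    | base => rw [Finset.Icc_eq_empty (by omega)]; simp
    | succ n hn ih =>
      have hnr : (0:ℝ) < n := lt_of_lt_of_le hmr (by exact_mod_cast hn)
      have hstep : (1:ℝ) / (n + 1) ≤ Real.log (n + 1) - Real.log n := by
        have h := Real.log_le_sub_one_of_pos (x := (n:ℝ) / (n + 1)) (by positivity)
        rw [Real.log_div (ne_of_gt hnr) (by positivity)] at h
        have : (n:ℝ) / (n + 1) - 1 = -(1 / (n + 1)) := by field_simp; ring
        rw [this] at h
        linarith
      rw [Finset.sum_Icc_succ_top (by omega : m + 1 ≤ n + 1)]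
      push_cast
      push_cast at ih
      linarith
  -- part 1
  have hS : (∑ i ∈ Finset.Icc m (K - 1), (1 / Δ i - 1 / Δ (i + 1)) * i) + (K:ℝ) / Δ K
      ≤ ((j:ℝ) / Δ j) * (Real.log K + 1) := by
    rw [habel (K - m) m hm1 (by omega)]
    have h1 : (m:ℝ) / Δ m ≤ (j:ℝ) / Δ j := by
      have := hkey m hm1 hmK
      rw [mul_one_div] at this
      calc (m:ℝ) / Δ m = m * (1 / Δ m) := by ring
        _ ≤ m * ((j:ℝ) / Δ j / m) := by
            exact mul_le_mul_of_nonneg_left this (by positivity)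
        _ = (j:ℝ) / Δ j := by field_simp
    have h2 : (∑ i ∈ Finset.Icc (m + 1) K, (1:ℝ) / Δ i)
        ≤ ((j:ℝ) / Δ j) * Real.log K := by
      calc (∑ i ∈ Finset.Icc (m + 1) K, (1:ℝ) / Δ i)
          ≤ ∑ i ∈ Finset.Icc (m + 1) K, ((j:ℝ) / Δ j) * (1 / i) := by
            apply Finset.sum_le_sum
            intro i hi
            obtain ⟨hi1, hi2⟩ := Finset.mem_Icc.mp hi
            exact hkey i (by omega) hi2
        _ = ((j:ℝ) / Δ j) * ∑ i ∈ Finset.Icc (m + 1) K, (1:ℝ) / i := by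
            rw [Finset.mul_sum]
        _ ≤ ((j:ℝ) / Δ j) * (Real.log K - Real.log m) :=
            mul_le_mul_of_nonneg_left (hharm K hmK) hjΔnn
        _ ≤ ((j:ℝ) / Δ j) * Real.log K := by
            have hlm : 0 ≤ Real.log m := Real.log_nonneg (by exact_mod_cast hm1)
            nlinarith
    calc (m:ℝ) / Δ m + ∑ i ∈ Finset.Icc (m + 1) K, 1 / Δ i
        ≤ (j:ℝ) / Δ j + ((j:ℝ) / Δ j) * Real.log K := add_le_add h1 h2
      _ = ((j:ℝ) / Δ j) * (Real.log K + 1) := by ring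
  refine ⟨hS, ?_⟩
  -- part 2
  have hΔm : 0 < Δ m := hΔpos m hm1 hmK
  have ham : a m = Δ 1 / Δ m := ha m hmmem
  have hdenom : (a m) ^ 2 * (Δ m) ^ 2 = (Δ 1) ^ 2 := by
    rw [ham]; field_simp
  have hsum2 : (∑ i ∈ Finset.Icc m K, (a i - a (i + 1)) * i)
      = Δ 1 * ((∑ i ∈ Finset.Icc m (K - 1), (1 / Δ i - 1 / Δ (i + 1)) * i)
          + (K:ℝ) / Δ K) := by
    have htop : (∑ i ∈ Finset.Icc m K, (a i - a (i + 1)) * i)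
        = (∑ i ∈ Finset.Icc m (K - 1), (a i - a (i + 1)) * i) + (a K - a (K + 1)) * K := by
      have hKe : K = (K - 1) + 1 := by omega
      rw [hKe, Finset.sum_Icc_succ_top (by omega : m ≤ K - 1 + 1), ← hKe]
    rw [htop, haK, ha K (Finset.mem_Icc.mpr ⟨hK, le_refl K⟩)]
    rw [mul_add, Finset.mul_sum]
    congr 1
    · apply Finset.sum_congr rfl
      intro i hi
      obtain ⟨hi1, hi2⟩ := Finset.mem_Icc.mp hi
      rw [ha i (Finset.mem_Icc.mpr ⟨by omega, by omega⟩),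
        ha (i + 1) (Finset.mem_Icc.mpr ⟨by omega, by omega⟩)]
      ring
    · ring
  rw [hsum2, hdenom]
  have hlogK : (0:ℝ) ≤ Real.log K := Real.log_nonneg (by exact_mod_cast hK)
  have hsup : (j:ℝ) / Δ j ≤ (Finset.Icc 1 K).sup' (Finset.nonempty_Icc.mpr hK)
      (fun k => (k : ℝ) / Δ k) := Finset.le_sup' (fun (k : ℕ) => (k : ℝ) / Δ k) hjmem
  calc Δ 1 * ((∑ i ∈ Finset.Icc m (K - 1), (1 / Δ i - 1 / Δ (i + 1)) * i)
        + (K:ℝ) / Δ K) / (Δ 1) ^ 2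
      = ((∑ i ∈ Finset.Icc m (K - 1), (1 / Δ i - 1 / Δ (i + 1)) * i)
        + (K:ℝ) / Δ K) / Δ 1 := by
        field_simp
    _ ≤ ((j:ℝ) / Δ j) * (Real.log K + 1) / Δ 1 := by gcongr
    _ = (1 / Δ 1 * ((j:ℝ) / Δ j)) * (Real.log K + 1) := by ring
    _ ≤ ((1 / Δ 1) * (Finset.Icc 1 K).sup' (Finset.nonempty_Icc.mpr hK)
          (fun k => (k : ℝ) / Δ k)) * (Real.log K + 1) := by
        apply mul_le_mul_of_nonneg_right _ (by linarith)
        exact mul_le_mul_of_nonneg_left hsup (by positivity)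
end
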